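/- arXiv:2002.04375 — 2 statements merged into one kernel-verified Lean document; each statement's English description precedes it below -/
import Mathlib

section
/- Let X, Y be real m×n matrices (columns in ℝ^n thought of as data). Let Z = Y · P, where P is the orthogonal projection onto the row space of X (i.e., P = X⁺ X). Let P_k denote the orthogonal projection onto the span of the top k left singular vectors of Z. Then A★ = P_k · Y · X⁺ is a minimizer of ‖Y − A X‖_F over all n×n matrices A with rank(A) ≤ k (here ‖·‖_F is the Frobenius norm). -/
open scoped BigOperators Matrix

/-- Frobenius norm of a real matrix. -/
noncomputable def frobNorm {n m : ℕ} (M : Matrix (Fin n) (Fin m) ℝ) : ℝ :=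
  Real.sqrt (∑ i, ∑ j, (M i j) ^ 2)

/-- The four Moore–Penrose conditions. -/
def IsMoorePenrose {n m : ℕ} (X : Matrix (Fin n) (Fin m) ℝ)
    (Xp : Matrix (Fin m) (Fin n) ℝ) : Prop :=
  X * Xp * X = X ∧ Xp * X * Xp = Xp ∧ (X * Xp)ᵀ = X * Xp ∧ (Xp * X)ᵀ = Xp * X

namespace StmtAux

open Matrix

variable {n m p q : ℕ}

lemma mul_vecMulVec (M : Matrix (Fin p) (Fin n) ℝ) (a : Fin n → ℝ) (b : Fin q → ℝ) :
    M * vecMulVec a b = vecMulVec (M *ᵥ a) b := by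
  ext i j
  simp [Matrix.mul_apply, vecMulVec_apply, Matrix.mulVec, dotProduct,
    Finset.sum_mul, mul_assoc]

lemma vecMulVec_mul_vecMulVec (a : Fin p → ℝ) (b c : Fin n → ℝ) (d : Fin q → ℝ) :
    vecMulVec a b * vecMulVec c d = (b ⬝ᵥ c) • vecMulVec a d := by
  ext i j
  simp only [Matrix.mul_apply, vecMulVec_apply, Matrix.smul_apply, dotProduct,
    Finset.sum_mul, smul_eq_mul, Finset.mul_sum]
  apply Finset.sum_congr rfl
  intro x _
  ring

lemma trace_vecMulVec (a b : Fin n → ℝ) :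
    Matrix.trace (vecMulVec a b) = a ⬝ᵥ b := by
  simp [Matrix.trace, Matrix.diag, vecMulVec_apply, dotProduct]

lemma transpose_vecMulVec (a b : Fin n → ℝ) :
    (vecMulVec a b)ᵀ = vecMulVec b a := by
  ext i j; simp [vecMulVec_apply, mul_comm]

lemma smul_vecMulVec (c : ℝ) (a b : Fin n → ℝ) :
    vecMulVec (c • a) b = c • vecMulVec a b := by
  ext i j; simp [vecMulVec_apply, mul_assoc]

lemma vecMulVec_mulVec (a : Fin p → ℝ) (b x : Fin n → ℝ) :
    vecMulVec a b *ᵥ x = (b ⬝ᵥ x) • a := by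
  ext i
  simp only [Matrix.mulVec, vecMulVec_apply, dotProduct, Pi.smul_apply, smul_eq_mul,
    Finset.sum_mul]
  apply Finset.sum_congr rfl
  intro x _
  ring

/-- squared Frobenius norm as a trace -/
noncomputable def tsq (M : Matrix (Fin n) (Fin m) ℝ) : ℝ := Matrix.trace (Mᵀ * M)

lemma tsq_eq_sum (M : Matrix (Fin n) (Fin m) ℝ) :
    tsq M = ∑ i, ∑ j, (M i j) ^ 2 := by
  unfold tsq
  rw [Matrix.trace]
  simp only [Matrix.diag, Matrix.mul_apply, Matrix.transpose_apply]
  rw [Finset.sum_comm]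
  simp [pow_two]

lemma tsq_nonneg (M : Matrix (Fin n) (Fin m) ℝ) : 0 ≤ tsq M := by
  rw [tsq_eq_sum]
  positivity

lemma frobNorm_eq (M : Matrix (Fin n) (Fin m) ℝ) :
    frobNorm M = Real.sqrt (tsq M) := by
  rw [frobNorm, tsq_eq_sum]

lemma frobNorm_le_frobNorm {M N : Matrix (Fin n) (Fin m) ℝ} (h : tsq M ≤ tsq N) :
    frobNorm M ≤ frobNorm N := by
  rw [frobNorm_eq, frobNorm_eq]
  exact Real.sqrt_le_sqrt h

lemma tsq_add_of_cross_zero {M N : Matrix (Fin n) (Fin m) ℝ}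
    (h : Matrix.trace (Mᵀ * N) = 0) : tsq (M + N) = tsq M + tsq N := by
  unfold tsq
  have h2 : Matrix.trace (Nᵀ * M) = 0 := by
    calc Matrix.trace (Nᵀ * M) = Matrix.trace ((Mᵀ * N)ᵀ) := by
          rw [Matrix.transpose_mul, Matrix.transpose_transpose]
      _ = Matrix.trace (Mᵀ * N) := Matrix.trace_transpose _
      _ = 0 := h
  rw [Matrix.transpose_add, Matrix.add_mul, Matrix.mul_add, Matrix.mul_add,
    Matrix.trace_add, Matrix.trace_add, Matrix.trace_add, h, h2]
  ring

/-- completeness of an orthonormal family of n vectors in ℝ^n -/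
lemma completeness (u : Fin n → Fin n → ℝ)
    (huon : ∀ i j, u i ⬝ᵥ u j = if i = j then (1 : ℝ) else 0) :
    ∑ i, vecMulVec (u i) (u i) = (1 : Matrix (Fin n) (Fin n) ℝ) := by
  set U : Matrix (Fin n) (Fin n) ℝ := Matrix.of u with hU
  have h1 : U * Uᵀ = 1 := by
    ext i j
    simpa [U, Matrix.mul_apply, Matrix.one_apply, dotProduct] using huon i j
  have h2 : Uᵀ * U = 1 := mul_eq_one_comm.mp h1
  calc ∑ i, vecMulVec (u i) (u i) = Uᵀ * U := by
        ext a b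
        simp [Matrix.mul_apply, vecMulVec_apply, U, Matrix.sum_apply, mul_comm]
    _ = 1 := h2

/-- tsq of a projected matrix -/
lemma tsq_proj {W : Matrix (Fin n) (Fin n) ℝ} (hWt : Wᵀ = W) (hWi : W * W = W)
    (Z : Matrix (Fin n) (Fin m) ℝ) :
    tsq (Z - W * Z) = Matrix.trace (Z * Zᵀ) - Matrix.trace (W * (Z * Zᵀ)) := by
  have key : (Z - W * Z)ᵀ * (Z - W * Z) = Zᵀ * Z - Zᵀ * (W * Z) := by
    rw [Matrix.transpose_sub, Matrix.transpose_mul, hWt]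
    rw [Matrix.sub_mul, Matrix.mul_sub, Matrix.mul_sub]
    rw [Matrix.mul_assoc Zᵀ W (W * Z), ← Matrix.mul_assoc W W Z, hWi]
    rw [Matrix.mul_assoc Zᵀ W Z]
    abel
  unfold tsq
  rw [key, Matrix.trace_sub]
  congr 1
  · rw [Matrix.trace_mul_comm]
  · rw [Matrix.trace_mul_comm, Matrix.mul_assoc]

/-- the combinatorial majorization lemma -/
lemma maj_lemma (k : ℕ) (s t : Fin n → ℝ) (hs : Antitone s) (hs0 : ∀ i, 0 ≤ s i)
    (ht0 : ∀ i, 0 ≤ t i) (ht1 : ∀ i, t i ≤ 1) (htsum : ∑ i, t i ≤ (k : ℝ)) :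
    ∑ i, s i * t i ≤ ∑ i ∈ Finset.univ.filter (fun i : Fin n => (i : ℕ) < k), s i := by
  by_cases hk : n ≤ k
  · have hfilter : Finset.univ.filter (fun i : Fin n => (i : ℕ) < k) = Finset.univ := by
      apply Finset.filter_true_of_mem
      intro i _
      exact lt_of_lt_of_le i.isLt hk
    rw [hfilter]
    apply Finset.sum_le_sum
    intro i _
    calc s i * t i ≤ s i * 1 := by
          apply mul_le_mul_of_nonneg_left (ht1 i) (hs0 i)
      _ = s i := mul_one _
  · push_neg at hk
    set c := s ⟨k, hk⟩ with hc
    set F := Finset.univ.filter (fun i : Fin n => (i : ℕ) < k) with hF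
    set G := Finset.univ.filter (fun i : Fin n => ¬ ((i : ℕ) < k)) with hG
    have hcard : F.card = k := by
      have hbij : F.card = ((Finset.range n).filter (fun i => i < k)).card := by
        refine Finset.card_bij (fun (i : Fin n) (_ : i ∈ F) => (i : ℕ)) ?_ ?_ ?_
        · intro a ha
          simp only [hF, Finset.mem_filter, Finset.mem_univ, true_and] at ha
          simp only [Finset.mem_filter, Finset.mem_range]
          exact ⟨a.isLt, ha⟩
        · intro a _ b _ h
          exact Fin.ext h
        · intro b hb
          simp only [Finset.mem_filter, Finset.mem_range] at hb
          refine ⟨⟨b, hb.1⟩, ?_, rfl⟩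
          simp [hF, hb.2]
      rw [hbij, Finset.range_eq_Ico, Finset.Ico_filter_lt, Nat.card_Ico]
      simp [min_eq_right hk.le]
    have hsplitS : ∑ i ∈ F, s i * t i + ∑ i ∈ G, s i * t i = ∑ i, s i * t i :=
      Finset.sum_filter_add_sum_filter_not Finset.univ _ _
    have hsplitT : ∑ i ∈ F, t i + ∑ i ∈ G, t i = ∑ i, t i :=
      Finset.sum_filter_add_sum_filter_not Finset.univ _ _
    have hA : ∑ i ∈ F, s i * t i ≤ ∑ i ∈ F, (s i + (c * t i - c)) := by
      apply Finset.sum_le_sum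
      intro i hi
      simp only [hF, Finset.mem_filter, Finset.mem_univ, true_and] at hi
      have hsc : c ≤ s i := by
        apply hs
        rw [Fin.le_def]
        exact Nat.le_of_lt_succ (Nat.lt_succ_of_lt hi)
      nlinarith [ht1 i, ht0 i, hs0 i]
    have hB : ∑ i ∈ G, s i * t i ≤ ∑ i ∈ G, c * t i := by
      apply Finset.sum_le_sum
      intro i hi
      simp only [hG, Finset.mem_filter, Finset.mem_univ, true_and, not_lt] at hi
      have hsc : s i ≤ c := by
        apply hs
        rw [Fin.le_def]
        exact hi
      exact mul_le_mul_of_nonneg_right hsc (ht0 i)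
    have hArw : ∑ i ∈ F, (s i + (c * t i - c)) =
        ∑ i ∈ F, s i + (c * ∑ i ∈ F, t i - c * k) := by
      rw [Finset.sum_add_distrib, Finset.sum_sub_distrib, ← Finset.mul_sum,
        Finset.sum_const, ← hcard]
      simp [mul_comm]
    have hBrw : ∑ i ∈ G, c * t i = c * ∑ i ∈ G, t i := by
      rw [Finset.mul_sum]
    have hct : c * (∑ i ∈ F, t i + ∑ i ∈ G, t i) ≤ c * k := by
      rw [hsplitT]
      exact mul_le_mul_of_nonneg_left htsum (hs0 _)
    rw [mul_add] at hct
    linarith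

lemma sum_mulVec {ι : Type*} (S : Finset ι) (M : ι → Matrix (Fin n) (Fin q) ℝ) (x : Fin q → ℝ) :
    (∑ i ∈ S, M i) *ᵥ x = ∑ i ∈ S, (M i *ᵥ x) := by
  ext i
  simp only [Matrix.mulVec, dotProduct, Matrix.sum_apply, Finset.sum_apply,
    Finset.sum_mul]
  rw [Finset.sum_comm]

lemma proj_idem {ι : Type*} [Fintype ι] [DecidableEq ι] (w : ι → Fin n → ℝ)
    (hw : ∀ i j, w i ⬝ᵥ w j = if i = j then (1 : ℝ) else 0) (S : Finset ι) :
    (∑ i ∈ S, vecMulVec (w i) (w i)) * (∑ i ∈ S, vecMulVec (w i) (w i)) =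
      ∑ i ∈ S, vecMulVec (w i) (w i) := by
  rw [Finset.sum_mul_sum]
  apply Finset.sum_congr rfl
  intro i hi
  calc ∑ j ∈ S, vecMulVec (w i) (w i) * vecMulVec (w j) (w j)
      = ∑ j ∈ S, if i = j then vecMulVec (w i) (w j) else 0 := by
        apply Finset.sum_congr rfl; intro j _
        rw [vecMulVec_mul_vecMulVec, hw, ite_smul, one_smul, zero_smul]
    _ = vecMulVec (w i) (w i) := by rw [Finset.sum_ite_eq S i]; simp [hi]

lemma rank_vecMulVec_le (a : Fin n → ℝ) (b : Fin m → ℝ) :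
    (Matrix.vecMulVec a b).rank ≤ 1 := by
  rw [Matrix.vecMulVec_eq (Fin 1)]
  refine le_trans (Matrix.rank_mul_le_left _ _) ?_
  refine le_trans (Matrix.rank_le_card_width _) ?_
  simp

lemma rank_add_le (A B : Matrix (Fin n) (Fin m) ℝ) : (A + B).rank ≤ A.rank + B.rank := by
  rw [Matrix.rank, Matrix.rank, Matrix.rank, Matrix.mulVecLin_add]
  have hle : LinearMap.range (A.mulVecLin + B.mulVecLin) ≤
      LinearMap.range A.mulVecLin ⊔ LinearMap.range B.mulVecLin := by
    rintro x ⟨v, rfl⟩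
    exact Submodule.add_mem_sup (LinearMap.mem_range_self _ v) (LinearMap.mem_range_self _ v)
  refine le_trans (Submodule.finrank_mono hle) ?_
  exact Submodule.finrank_add_le_finrank_add_finrank _ _

lemma rank_sum_le {ι : Type*} (S : Finset ι) (f : ι → Matrix (Fin n) (Fin m) ℝ)
    (h : ∀ i, (f i).rank ≤ 1) : (∑ i ∈ S, f i).rank ≤ S.card := by
  classical
  induction S using Finset.induction with
  | empty => simp
  | insert a T hni ih =>
    rw [Finset.sum_insert hni, Finset.card_insert_of_notMem hni]
    exact le_trans (rank_add_le _ _) (by have := h a; omega)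

lemma exists_projector (B : Matrix (Fin n) (Fin m) ℝ) :
    ∃ Q : Matrix (Fin n) (Fin n) ℝ, Qᵀ = Q ∧ Q * Q = Q ∧ Q * B = B ∧
      Matrix.trace Q = (B.rank : ℝ) := by
  classical
  set e := WithLp.linearEquiv 2 ℝ (Fin n → ℝ) with he
  set V : Submodule ℝ (EuclideanSpace ℝ (Fin n)) :=
    Submodule.map (e.symm : (Fin n → ℝ) ≃ₗ[ℝ] EuclideanSpace ℝ (Fin n)).toLinearMap
      (LinearMap.range B.mulVecLin) with hV
  have hrank : Module.finrank ℝ V = B.rank := by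
    rw [hV]
    exact LinearEquiv.finrank_map_eq _ _
  set b := stdOrthonormalBasis ℝ V with hb
  set w : Fin (Module.finrank ℝ V) → (Fin n → ℝ) := fun l => e ((b l : EuclideanSpace ℝ (Fin n)))
    with hwdef
  have hinner : ∀ x y : EuclideanSpace ℝ (Fin n),
      (inner ℝ x y : ℝ) = (e x) ⬝ᵥ (e y) := by
    intro x y
    rw [PiLp.inner_apply]
    simp [dotProduct, WithLp.linearEquiv_apply, e,
      RCLike.inner_apply, mul_comm]
  have hw : ∀ i j, w i ⬝ᵥ w j = if i = j then (1 : ℝ) else 0 := by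
    intro i j
    have := orthonormal_iff_ite.mp b.orthonormal i j
    rw [Submodule.coe_inner] at this
    rw [hwdef, ← hinner, this]
  set Q : Matrix (Fin n) (Fin n) ℝ := ∑ l, vecMulVec (w l) (w l) with hQ
  have hQt : Qᵀ = Q := by
    rw [hQ, Matrix.transpose_sum]
    exact Finset.sum_congr rfl fun i _ => transpose_vecMulVec _ _
  have hQQ : Q * Q = Q := proj_idem w hw _
  have hfix : ∀ x : Fin n → ℝ, x ∈ LinearMap.range B.mulVecLin → Q *ᵥ x = x := by
    intro x hx
    have hxV : e.symm x ∈ V := by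
      rw [hV]
      exact Submodule.mem_map_of_mem hx
    set xv : V := ⟨e.symm x, hxV⟩ with hxv
    have hco : ∀ l, w l ⬝ᵥ x = b.repr xv l := by
      intro l
      have hx' : x = e ↑xv := (e.apply_symm_apply x).symm
      rw [b.repr_apply_apply, Submodule.coe_inner, hinner, ← hx']
    calc Q *ᵥ x = ∑ l, (w l ⬝ᵥ x) • w l := by
          rw [hQ, sum_mulVec]
          exact Finset.sum_congr rfl fun l _ => vecMulVec_mulVec _ _ _
      _ = ∑ l, (b.repr xv l) • w l := by
          exact Finset.sum_congr rfl fun l _ => by rw [hco]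
      _ = e ((↑(∑ l, (b.repr xv l) • b l) : EuclideanSpace ℝ (Fin n))) := by
          rw [Submodule.coe_sum, map_sum]
          apply Finset.sum_congr rfl
          intro l _
          simp only [SetLike.val_smul, _root_.map_smul]
          rfl
      _ = e ((xv : EuclideanSpace ℝ (Fin n))) := by rw [b.sum_repr xv]
      _ = x := by rw [hxv]; exact e.apply_symm_apply x
  have hQB : Q * B = B := by
    ext i j
    have hcol : (fun l => B l j) ∈ LinearMap.range B.mulVecLin := by
      refine ⟨Pi.single j 1, ?_⟩
      rw [Matrix.mulVecLin_apply, Matrix.mulVec_single]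
      simp
      rfl
    have := congrFun (hfix _ hcol) i
    simpa [Matrix.mul_apply, Matrix.mulVec, dotProduct] using this
  refine ⟨Q, hQt, hQQ, hQB, ?_⟩
  rw [hQ, Matrix.trace_sum]
  have : ∀ l, Matrix.trace (vecMulVec (w l) (w l)) = (1 : ℝ) := by
    intro l
    rw [trace_vecMulVec, hw l l]
    simp
  rw [Finset.sum_congr rfl fun l _ => this l]
  simp [hrank]

end StmtAux

open StmtAux Matrix in
/-- Closed-form solution of the low-rank constrained least-squares problem:
`A★ = P_k Y X⁺` minimizes `‖Y − A X‖_F` over matrices of rank ≤ k, where `P_k`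
projects onto the span of the top-k left singular vectors of `Z = Y X⁺ X`. -/
theorem stmt2 {n m : ℕ} (k : ℕ)
    (X Y : Matrix (Fin n) (Fin m) ℝ) (Xp : Matrix (Fin m) (Fin n) ℝ)
    (hXp : IsMoorePenrose X Xp)
    (Z : Matrix (Fin n) (Fin m) ℝ) (hZ : Z = Y * (Xp * X))
    (σ : Fin n → ℝ) (hσdec : Antitone σ) (hσpos : ∀ i, 0 ≤ σ i)
    (u : Fin n → Fin n → ℝ)
    (huon : ∀ i j, u i ⬝ᵥ u j = if i = j then (1 : ℝ) else 0)
    (heig : ∀ i, (Z * Zᵀ) *ᵥ u i = (σ i ^ 2) • u i)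
    (Pk : Matrix (Fin n) (Fin n) ℝ)
    (hPk : Pk = ∑ i ∈ Finset.univ.filter (fun i : Fin n => (i : ℕ) < k),
      Matrix.vecMulVec (u i) (u i)) :
    (Pk * Y * Xp).rank ≤ k ∧
    ∀ A : Matrix (Fin n) (Fin n) ℝ, A.rank ≤ k →
      frobNorm (Y - (Pk * Y * Xp) * X) ≤ frobNorm (Y - A * X) := by
  obtain ⟨h1, h2, h3, h4⟩ := hXp
  have hXPX : X * (Xp * X) = X := by rw [← Matrix.mul_assoc]; exact h1
  have hPP : (Xp * X) * (Xp * X) = Xp * X := by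
    calc (Xp * X) * (Xp * X) = (Xp * X * Xp) * X := by
          rw [Matrix.mul_assoc (Xp * X) Xp X, Matrix.mul_assoc]
      _ = Xp * X := by rw [h2]
  have hZP : Z * (Xp * X) = Z := by rw [hZ, Matrix.mul_assoc, hPP]
  have hPkT : Pkᵀ = Pk := by
    rw [hPk, Matrix.transpose_sum]
    exact Finset.sum_congr rfl fun i _ => StmtAux.transpose_vecMulVec _ _
  have hPkI : Pk * Pk = Pk := by rw [hPk]; exact proj_idem u huon _
  constructor
  · calc (Pk * Y * Xp).rank ≤ (Pk * Y).rank := Matrix.rank_mul_le_left _ _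
      _ ≤ Pk.rank := Matrix.rank_mul_le_left _ _
      _ ≤ (Finset.univ.filter (fun i : Fin n => (i : ℕ) < k)).card := by
          rw [hPk]
          exact rank_sum_le _ _ (fun i => StmtAux.rank_vecMulVec_le _ _)
      _ ≤ k := by
          have hcc : (Finset.univ.filter (fun i : Fin n => (i : ℕ) < k)).card ≤
              (Finset.range k).card :=
            Finset.card_le_card_of_injOn (fun i => (i : ℕ))
              (by intro a ha
                  simp only [Finset.coe_filter, Finset.mem_univ, true_and, Set.mem_setOf_eq] at ha
                  simpa using ha)
              (fun a _ b _ hab => Fin.ext hab)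
          simpa using hcc
  · intro A hA
    set M : Matrix (Fin n) (Fin n) ℝ := Z * Zᵀ with hM
    have hAstar : (Pk * Y * Xp) * X = Pk * Z := by
      rw [Matrix.mul_assoc (Pk * Y) Xp X, Matrix.mul_assoc Pk Y (Xp * X), ← hZ]
    have hYZP : (Y - Z) * (Xp * X) = 0 := by
      rw [Matrix.sub_mul, hZP, ← hZ, sub_self]
    have hdecomp : ∀ C : Matrix (Fin n) (Fin n) ℝ,
        tsq (Y - C * X) = tsq (Y - Z) + tsq (Z - C * X) := by
      intro C
      have hsum : Y - C * X = (Y - Z) + (Z - C * X) := by abel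
      rw [hsum]
      apply tsq_add_of_cross_zero
      have hNP : (Z - C * X) * (Xp * X) = Z - C * X := by
        rw [Matrix.sub_mul, hZP, Matrix.mul_assoc, hXPX]
      calc Matrix.trace ((Y - Z)ᵀ * (Z - C * X))
          = Matrix.trace ((Y - Z)ᵀ * ((Z - C * X) * (Xp * X))) := by rw [hNP]
        _ = Matrix.trace (((Y - Z)ᵀ * (Z - C * X)) * (Xp * X)) := by rw [Matrix.mul_assoc]
        _ = Matrix.trace ((Xp * X) * ((Y - Z)ᵀ * (Z - C * X))) := Matrix.trace_mul_comm _ _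
        _ = Matrix.trace ((((Y - Z) * (Xp * X))ᵀ) * (Z - C * X)) := by
            rw [Matrix.transpose_mul, h4]
            congr 1
            simp only [Matrix.mul_assoc]
        _ = 0 := by rw [hYZP]; simp
    -- get the projector onto the column space of A * X
    obtain ⟨Q, hQt, hQQ, hQB, hQtr⟩ := exists_projector (A * X)
    have hrk : ((A * X).rank : ℝ) ≤ (k : ℝ) := by
      have : (A * X).rank ≤ k := le_trans (Matrix.rank_mul_le_left _ _) hA
      exact_mod_cast this
    -- spectral decomposition of M
    have hspec : M = ∑ j, (σ j ^ 2) • vecMulVec (u j) (u j) := by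
      calc M = M * ∑ j, vecMulVec (u j) (u j) := by
            rw [completeness u huon, Matrix.mul_one]
        _ = ∑ j, M * vecMulVec (u j) (u j) := Finset.mul_sum _ _ _
        _ = ∑ j, (σ j ^ 2) • vecMulVec (u j) (u j) := by
            apply Finset.sum_congr rfl
            intro j _
            rw [StmtAux.mul_vecMulVec, heig j, StmtAux.smul_vecMulVec]
    have htrPk : Matrix.trace (Pk * M) =
        ∑ i ∈ Finset.univ.filter (fun i : Fin n => (i : ℕ) < k), σ i ^ 2 := by
      rw [hPk, Finset.sum_mul, Matrix.trace_sum]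
      apply Finset.sum_congr rfl
      intro i _
      rw [Matrix.trace_mul_comm, StmtAux.mul_vecMulVec, heig i, StmtAux.smul_vecMulVec,
        Matrix.trace_smul, StmtAux.trace_vecMulVec, huon i i]
      simp
    set t : Fin n → ℝ := fun j => (Q *ᵥ u j) ⬝ᵥ u j with ht
    have htself : ∀ j, (Q *ᵥ u j) ⬝ᵥ (Q *ᵥ u j) = t j := by
      intro j
      have key : (Q *ᵥ u j) ᵥ* Q = Q *ᵥ u j := by
        rw [← Matrix.mulVec_transpose, hQt, Matrix.mulVec_mulVec, hQQ]
      rw [Matrix.dotProduct_mulVec, key]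
    have ht0 : ∀ j, 0 ≤ t j := by
      intro j
      rw [← htself j]
      exact Finset.sum_nonneg fun i _ => mul_self_nonneg _
    have ht1 : ∀ j, t j ≤ 1 := by
      intro j
      have hnn : 0 ≤ (u j - Q *ᵥ u j) ⬝ᵥ (u j - Q *ᵥ u j) := by
        exact Finset.sum_nonneg fun i _ => mul_self_nonneg _
      have hexp : (u j - Q *ᵥ u j) ⬝ᵥ (u j - Q *ᵥ u j) = 1 - t j := by
        rw [sub_dotProduct, dotProduct_sub, dotProduct_sub]
        rw [huon j j, dotProduct_comm (u j) (Q *ᵥ u j), htself j]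
        simp [ht]
      linarith [hnn, hexp ▸ hnn]
    have htsum : ∑ j, t j ≤ (k : ℝ) := by
      have : ∑ j, t j = Matrix.trace Q := by
        calc ∑ j, t j = ∑ j, Matrix.trace (Q * vecMulVec (u j) (u j)) := by
              apply Finset.sum_congr rfl
              intro j _
              rw [StmtAux.mul_vecMulVec, StmtAux.trace_vecMulVec]
          _ = Matrix.trace (Q * ∑ j, vecMulVec (u j) (u j)) := by
              rw [Finset.mul_sum, Matrix.trace_sum]
          _ = Matrix.trace Q := by rw [completeness u huon, Matrix.mul_one]
      rw [this, hQtr]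
      exact hrk
    have htrQ : Matrix.trace (Q * M) = ∑ j, σ j ^ 2 * t j := by
      calc Matrix.trace (Q * M)
          = Matrix.trace (∑ j, (σ j ^ 2) • (Q * vecMulVec (u j) (u j))) := by
            rw [← Finset.sum_congr rfl fun j (_ : j ∈ Finset.univ) =>
              Matrix.mul_smul Q (σ j ^ 2) (vecMulVec (u j) (u j)), ← Finset.mul_sum, ← hspec]
        _ = ∑ j, σ j ^ 2 * t j := by
            rw [Matrix.trace_sum]
            apply Finset.sum_congr rfl
            intro j _
            rw [Matrix.trace_smul, StmtAux.mul_vecMulVec, StmtAux.trace_vecMulVec]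
            simp [ht]
    have hmaj : Matrix.trace (Q * M) ≤ Matrix.trace (Pk * M) := by
      rw [htrQ, htrPk]
      refine maj_lemma k (fun i => σ i ^ 2) t ?_ (fun i => sq_nonneg _) ht0 ht1 htsum
      intro i j hij
      exact pow_le_pow_left₀ (hσpos j) (hσdec hij) 2
    -- assemble
    have hQfix : Q * (Q * Z - A * X) = Q * Z - A * X := by
      rw [Matrix.mul_sub, ← Matrix.mul_assoc, hQQ, hQB]
    have hcross2 : Matrix.trace ((Z - Q * Z)ᵀ * (Q * Z - A * X)) = 0 := by
      rw [Matrix.transpose_sub, Matrix.sub_mul, Matrix.transpose_mul, hQt,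
        Matrix.mul_assoc, hQfix, Matrix.trace_sub, sub_self]
    have hsplit : Z - A * X = (Z - Q * Z) + (Q * Z - A * X) := by abel
    have hZAX : tsq (Z - Q * Z) ≤ tsq (Z - A * X) := by
      rw [hsplit, tsq_add_of_cross_zero hcross2]
      have := tsq_nonneg (Q * Z - A * X)
      linarith
    have hL : tsq (Z - Pk * Z) = Matrix.trace M - Matrix.trace (Pk * M) :=
      tsq_proj hPkT hPkI Z
    have hR : tsq (Z - Q * Z) = Matrix.trace M - Matrix.trace (Q * M) :=
      tsq_proj hQt hQQ Z
    apply frobNorm_le_frobNorm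
    rw [hdecomp (Pk * Y * Xp), hdecomp A, hAstar, hL]
    linarith [hmaj, hZAX, hR]
end

section
/- Let X, Y ∈ ℝ^{n×m}, Z = Y X⁺ X, and A★_k = P_k Y X⁺ with P_k the orthogonal projector onto the top-k left singular subspace of Z. Then ‖Y − A★_k X‖_F² = ‖Y − Y X⁺ X‖_F² + ∑_{i > k} σᵢ(Z)², where σᵢ(Z) are the singular values of Z in decreasing order. In particular, the minimal value of ‖Y − A X‖_F over rank-≤k matrices A equals (‖Y(I − X⁺X)‖_F² + ∑_{i>k} σᵢ(Z)²)^{1/2}. -/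
open scoped BigOperators Matrix

namespace Stmt17Aux

open Matrix

variable {n m : ℕ}

lemma frob_sq (M : Matrix (Fin n) (Fin m) ℝ) :
    frobNorm M ^ 2 = Matrix.trace (M * Mᵀ) := by
  have h : Matrix.trace (M * Mᵀ) = ∑ i, ∑ j, M i j ^ 2 := by
    simp [Matrix.trace, Matrix.diag, Matrix.mul_apply, sq]
  rw [h, frobNorm, Real.sq_sqrt]
  positivity

lemma trace_sq_nonneg (M : Matrix (Fin n) (Fin m) ℝ) : 0 ≤ Matrix.trace (M * Mᵀ) := by
  rw [← frob_sq]; positivity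

lemma pyth {M N : Matrix (Fin n) (Fin m) ℝ} (h : Matrix.trace (M * Nᵀ) = 0) :
    Matrix.trace ((M + N) * (M + N)ᵀ) = Matrix.trace (M * Mᵀ) + Matrix.trace (N * Nᵀ) := by
  have h2 : Matrix.trace (N * Mᵀ) = 0 := by
    have : (M * Nᵀ)ᵀ = N * Mᵀ := by simp [Matrix.transpose_mul]
    rw [← this, Matrix.trace_transpose, h]
  simp only [Matrix.transpose_add, Matrix.add_mul, Matrix.mul_add, Matrix.trace_add]
  rw [h, h2]; ring

lemma mul_vecMulVec (M : Matrix (Fin n) (Fin n) ℝ) (a b : Fin n → ℝ) :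
    M * Matrix.vecMulVec a b = Matrix.vecMulVec (M *ᵥ a) b := by
  ext i j
  simp [Matrix.mul_apply, Matrix.vecMulVec_apply, Matrix.mulVec, dotProduct,
    Finset.sum_mul, mul_assoc]

lemma vecMulVec_smul_left (c : ℝ) (a b : Fin n → ℝ) :
    Matrix.vecMulVec (c • a) b = c • Matrix.vecMulVec a b := by
  ext i j; simp [Matrix.vecMulVec_apply, mul_assoc]

lemma vecMulVec_mul_vecMulVec (a b c d : Fin n → ℝ) :
    Matrix.vecMulVec a b * Matrix.vecMulVec c d = (b ⬝ᵥ c) • Matrix.vecMulVec a d := by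
  ext i j
  simp [Matrix.mul_apply, Matrix.vecMulVec_apply, dotProduct, Finset.sum_mul,
    Finset.mul_sum]
  ring_nf
  apply Finset.sum_congr rfl
  intro x _
  ring

lemma vecMulVec_mulVec (a b x : Fin n → ℝ) :
    Matrix.vecMulVec a b *ᵥ x = (b ⬝ᵥ x) • a := by
  ext i
  simp only [Matrix.mulVec, Matrix.vecMulVec_apply, dotProduct, Pi.smul_apply,
    smul_eq_mul, Finset.sum_mul, Matrix.of_apply]
  apply Finset.sum_congr rfl; intros; ring

lemma trace_vecMulVec (a b : Fin n → ℝ) :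
    Matrix.trace (Matrix.vecMulVec a b) = a ⬝ᵥ b := by
  simp [Matrix.trace, Matrix.diag, Matrix.vecMulVec_apply, dotProduct]

lemma trace_vecMulVec_mul (a b : Fin n → ℝ) (M : Matrix (Fin n) (Fin n) ℝ) :
    Matrix.trace (Matrix.vecMulVec a b * M) = b ⬝ᵥ (M *ᵥ a) := by
  rw [Matrix.trace_mul_comm, mul_vecMulVec, trace_vecMulVec, dotProduct_comm]

lemma vecMulVec_transpose' (a b : Fin n → ℝ) :
    (Matrix.vecMulVec a b)ᵀ = Matrix.vecMulVec b a := by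
  ext i j; simp [Matrix.vecMulVec_apply, mul_comm]

lemma sum_mulVec' {ι : Type*} (s : Finset ι) (M : ι → Matrix (Fin n) (Fin n) ℝ)
    (x : Fin n → ℝ) :
    (∑ j ∈ s, M j) *ᵥ x = ∑ j ∈ s, (M j *ᵥ x) := by
  ext i
  simp only [Matrix.mulVec, dotProduct, Finset.sum_apply, Matrix.sum_apply,
    Finset.sum_mul]
  rw [Finset.sum_comm]

lemma dotProduct_finset_sum {ι : Type*} (s : Finset ι) (v : Fin n → ℝ) (f : ι → Fin n → ℝ) :
    v ⬝ᵥ (∑ j ∈ s, f j) = ∑ j ∈ s, v ⬝ᵥ f j := by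
  simp only [dotProduct, Finset.sum_apply, Finset.mul_sum]
  rw [Finset.sum_comm]

lemma trace_proj_conj {Q : Matrix (Fin n) (Fin n) ℝ} (hQT : Qᵀ = Q) (hQQ : Q * Q = Q)
    (M : Matrix (Fin n) (Fin m) ℝ) :
    Matrix.trace (Q * M * (Q * M)ᵀ) = Matrix.trace (M * Mᵀ * Q) := by
  rw [Matrix.transpose_mul, hQT]
  calc Matrix.trace (Q * M * (Mᵀ * Q)) = Matrix.trace ((Mᵀ * Q) * (Q * M)) :=
        Matrix.trace_mul_comm _ _
    _ = Matrix.trace (Mᵀ * (Q * M)) := by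
        rw [Matrix.mul_assoc Mᵀ, ← Matrix.mul_assoc Q, hQQ]
    _ = Matrix.trace ((Q * M) * Mᵀ) := Matrix.trace_mul_comm _ _
    _ = Matrix.trace (M * Mᵀ * Q) := by
        rw [Matrix.mul_assoc Q, Matrix.trace_mul_comm, Matrix.mul_assoc]

lemma dot_proj_nonneg {P : Matrix (Fin n) (Fin n) ℝ} (hT : Pᵀ = P) (hI : P * P = P)
    (a : Fin n → ℝ) : 0 ≤ a ⬝ᵥ (P *ᵥ a) := by
  have h1 : a ⬝ᵥ (P *ᵥ a) = (P *ᵥ a) ⬝ᵥ (P *ᵥ a) := by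
    conv_lhs => rw [← hI, ← Matrix.mulVec_mulVec, Matrix.dotProduct_mulVec, ← hT,
      Matrix.vecMul_transpose, hT]
  rw [h1]
  exact Finset.sum_nonneg fun i _ => mul_self_nonneg _

lemma exists_proj (k : ℕ) (B : Matrix (Fin n) (Fin m) ℝ) (hB : B.rank ≤ k) :
    ∃ P : Matrix (Fin n) (Fin n) ℝ,
      Pᵀ = P ∧ P * P = P ∧ P * B = B ∧ Matrix.trace P ≤ (k : ℝ) := by
  classical
  set L : EuclideanSpace ℝ (Fin n) ≃ₗ[ℝ] (Fin n → ℝ) :=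
    WithLp.linearEquiv 2 ℝ (Fin n → ℝ) with hL
  set S : Submodule ℝ (EuclideanSpace ℝ (Fin n)) :=
    (LinearMap.range B.mulVecLin).map (L.symm : (Fin n → ℝ) →ₗ[ℝ] EuclideanSpace ℝ (Fin n))
    with hS
  have hfr : Module.finrank ℝ S = B.rank := by
    rw [hS, LinearEquiv.finrank_map_eq]; rfl
  set r := Module.finrank ℝ S with hr
  let b := stdOrthonormalBasis ℝ S
  set w : Fin r → (Fin n → ℝ) := fun j => L ((b j : EuclideanSpace ℝ (Fin n))) with hw
  have hinner : ∀ x y : EuclideanSpace ℝ (Fin n), (inner ℝ x y : ℝ) = L x ⬝ᵥ L y := by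
    intro x y
    simp [PiLp.inner_apply, RCLike.inner_apply, dotProduct, hL, mul_comm]
  have hwon : ∀ j l, w j ⬝ᵥ w l = if j = l then (1:ℝ) else 0 := by
    intro j l
    have h2 := (orthonormal_iff_ite.mp b.orthonormal) j l
    rw [Submodule.coe_inner, hinner] at h2
    simpa [hw] using h2
  set P : Matrix (Fin n) (Fin n) ℝ := ∑ j, Matrix.vecMulVec (w j) (w j) with hP
  have hPT : Pᵀ = P := by
    rw [hP, Matrix.transpose_sum]
    exact Finset.sum_congr rfl fun j _ => vecMulVec_transpose' _ _
  have hPP : P * P = P := by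
    rw [hP, Finset.sum_mul]
    refine Finset.sum_congr rfl fun j _ => ?_
    rw [Finset.mul_sum]
    have : ∀ l, Matrix.vecMulVec (w j) (w j) * Matrix.vecMulVec (w l) (w l)
        = (w j ⬝ᵥ w l) • Matrix.vecMulVec (w j) (w l) :=
      fun l => vecMulVec_mul_vecMulVec _ _ _ _
    simp only [this, hwon, ite_smul, one_smul, zero_smul]
    simp
  have hfix : ∀ y : S, P *ᵥ L (y : EuclideanSpace ℝ (Fin n)) = L (y : EuclideanSpace ℝ (Fin n)) := by
    intro y
    have hy := b.sum_repr' y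
    have hy2 : ∑ j, (inner ℝ (b j : EuclideanSpace ℝ (Fin n)) ((y : EuclideanSpace ℝ (Fin n))) : ℝ) • w j
        = L (y : EuclideanSpace ℝ (Fin n)) := by
      have := congrArg (fun z : S => L (z : EuclideanSpace ℝ (Fin n))) hy
      simp only [Submodule.coe_sum, Submodule.coe_smul, map_sum, _root_.map_smul] at this
      simpa [hw, Submodule.coe_inner] using this
    calc P *ᵥ L (y : EuclideanSpace ℝ (Fin n))
        = ∑ j, (w j ⬝ᵥ L (y : EuclideanSpace ℝ (Fin n))) • w j := by
          rw [hP, sum_mulVec']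
          exact Finset.sum_congr rfl fun j _ => vecMulVec_mulVec _ _ _
      _ = ∑ j, (inner ℝ (b j : EuclideanSpace ℝ (Fin n)) ((y : EuclideanSpace ℝ (Fin n))) : ℝ) • w j := by
          exact Finset.sum_congr rfl fun j _ => by rw [hinner]
      _ = L (y : EuclideanSpace ℝ (Fin n)) := hy2
  have hPB : P * B = B := by
    ext i j
    have hcol : (fun i0 => B i0 j) ∈ LinearMap.range B.mulVecLin := by
      refine ⟨Pi.single j 1, ?_⟩
      ext i0
      simp [Matrix.mulVecLin_apply, Matrix.mulVec_single]
    set y : S := ⟨L.symm (fun i0 => B i0 j), Submodule.mem_map_of_mem hcol⟩ with hy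
    have h3 := hfix y
    have h4 : L (y : EuclideanSpace ℝ (Fin n)) = fun i0 => B i0 j := by
      rw [hy]; simp
    rw [h4] at h3
    have h5 := congrFun h3 i
    simpa [Matrix.mul_apply, Matrix.mulVec, dotProduct] using h5
  have htr : Matrix.trace P = (r : ℝ) := by
    rw [hP, Matrix.trace_sum]
    simp only [trace_vecMulVec, hwon]
    simp
  refine ⟨P, hPT, hPP, hPB, ?_⟩
  rw [htr]
  exact_mod_cast (hfr ▸ hB : r ≤ k)

lemma rearrange (k : ℕ) (σ : Fin n → ℝ) (hdec : Antitone σ) (hnn : ∀ i, 0 ≤ σ i)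
    (c : Fin n → ℝ) (hc0 : ∀ i, 0 ≤ c i) (hc1 : ∀ i, c i ≤ 1) (hsum : ∑ i, c i ≤ (k : ℝ)) :
    ∑ i, σ i ^ 2 * c i ≤ ∑ i ∈ Finset.univ.filter (fun i : Fin n => (i : ℕ) < k), σ i ^ 2 := by
  classical
  by_cases hk : k < n
  · set F1 := Finset.univ.filter (fun i : Fin n => (i : ℕ) < k) with hF1
    set F2 := Finset.univ.filter (fun i : Fin n => ¬ (i : ℕ) < k) with hF2
    set s := σ ⟨k, hk⟩ ^ 2 with hs
    have hs0 : 0 ≤ s := by positivity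
    have hcard : (F1.card : ℝ) = k := by
      have : F1 = Finset.Iio (⟨k, hk⟩ : Fin n) := by
        ext i
        simp [hF1, Fin.lt_def]
      rw [this, Fin.card_Iio]
    have hsplitc : ∑ i ∈ F1, c i + ∑ i ∈ F2, c i = ∑ i, c i :=
      Finset.sum_filter_add_sum_filter_not _ _ _
    have hsplit : ∑ i ∈ F1, (σ i ^ 2 * c i) + ∑ i ∈ F2, (σ i ^ 2 * c i)
        = ∑ i, σ i ^ 2 * c i :=
      Finset.sum_filter_add_sum_filter_not _ _ _
    have hA : ∑ i ∈ F1, (σ i ^ 2 * c i)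
        ≤ ∑ i ∈ F1, (σ i ^ 2 - s * (1 - c i)) := by
      refine Finset.sum_le_sum fun i hi => ?_
      have hik : (i : ℕ) < k := by
        simpa [hF1] using hi
      have hσ : σ ⟨k, hk⟩ ≤ σ i := hdec (by simp [Fin.le_def]; omega)
      have hsle : s ≤ σ i ^ 2 := by
        rw [hs]
        exact pow_le_pow_left₀ (hnn _) hσ 2
      nlinarith [mul_nonneg (sub_nonneg.mpr hsle) (sub_nonneg.mpr (hc1 i))]
    have hB : ∑ i ∈ F2, (σ i ^ 2 * c i) ≤ ∑ i ∈ F2, s * c i := by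
      refine Finset.sum_le_sum fun i hi => ?_
      have hik : k ≤ (i : ℕ) := by
        have := Finset.mem_filter.mp hi
        omega
      have hσ : σ i ≤ σ ⟨k, hk⟩ := hdec (by simp [Fin.le_def]; omega)
      have : σ i ^ 2 ≤ s := by
        rw [hs]; exact pow_le_pow_left₀ (hnn _) hσ 2
      exact mul_le_mul_of_nonneg_right this (hc0 i)
    have e1 : ∑ i ∈ F1, (σ i ^ 2 - s * (1 - c i))
        = ∑ i ∈ F1, σ i ^ 2 - s * ((k : ℝ) - ∑ i ∈ F1, c i) := by
      rw [Finset.sum_sub_distrib]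
      congr 1
      rw [← Finset.mul_sum]
      congr 1
      rw [Finset.sum_sub_distrib, Finset.sum_const, nsmul_eq_mul, mul_one, hcard]
    have e2 : ∑ i ∈ F2, s * c i = s * ∑ i ∈ F2, c i := by
      rw [Finset.mul_sum]
    have hfin : s * (∑ i, c i - (k : ℝ)) ≤ 0 := by
      have := mul_nonneg hs0 (sub_nonneg.mpr hsum)
      nlinarith
    calc ∑ i, σ i ^ 2 * c i
        = ∑ i ∈ F1, (σ i ^ 2 * c i) + ∑ i ∈ F2, (σ i ^ 2 * c i) := hsplit.symm
      _ ≤ (∑ i ∈ F1, σ i ^ 2 - s * ((k : ℝ) - ∑ i ∈ F1, c i)) + s * ∑ i ∈ F2, c i := by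
          rw [← e1, ← e2]; exact add_le_add hA hB
      _ ≤ ∑ i ∈ F1, σ i ^ 2 := by nlinarith [hsplitc, hfin]
  · have hF : Finset.univ.filter (fun i : Fin n => (i : ℕ) < k) = Finset.univ := by
      ext i
      simp only [Finset.mem_filter, Finset.mem_univ, true_and, iff_true]
      omega
    rw [hF]
    refine Finset.sum_le_sum fun i _ => ?_
    nlinarith [hc0 i, hc1 i, sq_nonneg (σ i)]

end Stmt17Aux

open Matrix Stmt17Aux in
/-- Error decomposition for the optimal low-rank solution `A★_k = P_k Y X⁺`:
`‖Y − A★_k X‖_F² = ‖Y − Y X⁺ X‖_F² + ∑_{i>k} σᵢ(Z)²`, and this is the minimal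
value of `‖Y − A X‖_F` over matrices of rank ≤ k. -/
theorem stmt17 {n m : ℕ} (k : ℕ)
    (X Y : Matrix (Fin n) (Fin m) ℝ) (Xp : Matrix (Fin m) (Fin n) ℝ)
    (hXp : IsMoorePenrose X Xp)
    (Z : Matrix (Fin n) (Fin m) ℝ) (hZ : Z = Y * (Xp * X))
    (σ : Fin n → ℝ) (hσdec : Antitone σ) (hσnn : ∀ i, 0 ≤ σ i)
    (u : Fin n → Fin n → ℝ)
    (huon : ∀ i j, u i ⬝ᵥ u j = if i = j then (1 : ℝ) else 0)
    (heig : ∀ i, (Z * Zᵀ) *ᵥ u i = (σ i ^ 2) • u i)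
    (Pk : Matrix (Fin n) (Fin n) ℝ)
    (hPk : Pk = ∑ i ∈ Finset.univ.filter (fun i : Fin n => (i : ℕ) < k),
      Matrix.vecMulVec (u i) (u i)) :
    frobNorm (Y - (Pk * Y * Xp) * X) ^ 2 =
        frobNorm (Y - Y * (Xp * X)) ^ 2 +
          ∑ i ∈ Finset.univ.filter (fun i : Fin n => k ≤ (i : ℕ)), σ i ^ 2 ∧
      ∀ A : Matrix (Fin n) (Fin n) ℝ, A.rank ≤ k →
        Real.sqrt (frobNorm (Y - Y * (Xp * X)) ^ 2 +
            ∑ i ∈ Finset.univ.filter (fun i : Fin n => k ≤ (i : ℕ)), σ i ^ 2) ≤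
          frobNorm (Y - A * X) := by
  classical
  obtain ⟨h1, h2, h3, h4⟩ := hXp
  have hQQ : (Xp * X) * (Xp * X) = Xp * X := by
    rw [Matrix.mul_assoc, ← Matrix.mul_assoc X, h1]
  have hZQ : Z * (Xp * X) = Z := by
    rw [hZ, Matrix.mul_assoc, hQQ]
  have hZT : Zᵀ = (Xp * X) * Yᵀ := by
    rw [hZ, Matrix.transpose_mul, h4]
  have hYZZT : (Y - Z) * Zᵀ = 0 := by
    have e : Y * Zᵀ = Z * Zᵀ := by
      conv_lhs => rw [hZT, ← Matrix.mul_assoc, ← hZ]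
      conv_rhs => rw [hZT, ← Matrix.mul_assoc, hZQ]
    rw [Matrix.sub_mul, e, sub_self]
  have hXQT : (Xp * X) * Xᵀ = Xᵀ := by
    have hX : X * (Xp * X) = X := by rw [← Matrix.mul_assoc, h1]
    calc (Xp * X) * Xᵀ = (Xp * X)ᵀ * Xᵀ := by rw [h4]
      _ = (X * (Xp * X))ᵀ := by rw [← Matrix.transpose_mul]
      _ = Xᵀ := by rw [hX]
  have hYZXT : (Y - Z) * Xᵀ = 0 := by
    rw [Matrix.sub_mul, hZ, Matrix.mul_assoc, hXQT, sub_self]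
  have hsumuu : ∑ i, Matrix.vecMulVec (u i) (u i) = (1 : Matrix (Fin n) (Fin n) ℝ) := by
    set U : Matrix (Fin n) (Fin n) ℝ := Matrix.of u with hU
    have hUUT : U * Uᵀ = 1 := by
      ext i j
      simpa [hU, Matrix.mul_apply, Matrix.one_apply, dotProduct] using huon i j
    have hUTU : Uᵀ * U = 1 := mul_eq_one_comm.mp hUUT
    rw [← hUTU]
    ext a b
    simp [hU, Matrix.mul_apply, Matrix.sum_apply, Matrix.vecMulVec_apply, mul_comm]
  have hZZT : Z * Zᵀ = ∑ i, σ i ^ 2 • Matrix.vecMulVec (u i) (u i) := by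
    calc Z * Zᵀ = (Z * Zᵀ) * ∑ i, Matrix.vecMulVec (u i) (u i) := by
          rw [hsumuu, Matrix.mul_one]
      _ = ∑ i, (Z * Zᵀ) * Matrix.vecMulVec (u i) (u i) := Finset.mul_sum _ _ _
      _ = ∑ i, σ i ^ 2 • Matrix.vecMulVec (u i) (u i) := by
          refine Finset.sum_congr rfl fun i _ => ?_
          rw [Stmt17Aux.mul_vecMulVec, heig i, vecMulVec_smul_left]
  have htrZZT : Matrix.trace (Z * Zᵀ) = ∑ i, σ i ^ 2 := by
    rw [hZZT, Matrix.trace_sum]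
    refine Finset.sum_congr rfl fun i _ => ?_
    rw [Matrix.trace_smul, Stmt17Aux.trace_vecMulVec, huon i i]
    simp
  have htrZZTP : ∀ P : Matrix (Fin n) (Fin n) ℝ,
      Matrix.trace (Z * Zᵀ * P) = ∑ i, σ i ^ 2 * (u i ⬝ᵥ (P *ᵥ u i)) := by
    intro P
    rw [hZZT, Finset.sum_mul, Matrix.trace_sum]
    refine Finset.sum_congr rfl fun i _ => ?_
    rw [Matrix.smul_mul, Matrix.trace_smul, trace_vecMulVec_mul]
    simp
  have hproj : ∀ P : Matrix (Fin n) (Fin n) ℝ, Pᵀ = P → P * P = P →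
      Matrix.trace ((1 - P) * Z * ((1 - P) * Z)ᵀ)
        = ∑ i, σ i ^ 2 - Matrix.trace (Z * Zᵀ * P) := by
    intro P hPT hPP
    have hQT : (1 - P)ᵀ = 1 - P := by
      rw [Matrix.transpose_sub, Matrix.transpose_one, hPT]
    have hQQ' : (1 - P) * (1 - P) = 1 - P := by
      rw [Matrix.sub_mul, Matrix.mul_sub, Matrix.mul_sub, hPP]
      simp
    calc Matrix.trace ((1 - P) * Z * ((1 - P) * Z)ᵀ)
        = Matrix.trace (Z * Zᵀ * (1 - P)) := trace_proj_conj hQT hQQ' Z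
      _ = ∑ i, σ i ^ 2 - Matrix.trace (Z * Zᵀ * P) := by
          rw [Matrix.mul_sub, Matrix.mul_one, Matrix.trace_sub, htrZZT]
  have hsumsplit : ∑ i ∈ Finset.univ.filter (fun i : Fin n => (i : ℕ) < k), σ i ^ 2
      + ∑ i ∈ Finset.univ.filter (fun i : Fin n => k ≤ (i : ℕ)), σ i ^ 2 = ∑ i, σ i ^ 2 := by
    have h : Finset.univ.filter (fun i : Fin n => k ≤ (i : ℕ))
        = Finset.univ.filter (fun i : Fin n => ¬ (i : ℕ) < k) := by
      ext i; simp [not_lt]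
    rw [h]
    exact Finset.sum_filter_add_sum_filter_not _ _ _
  constructor
  · -- equality for the optimal solution
    have hPkT : Pkᵀ = Pk := by
      rw [hPk, Matrix.transpose_sum]
      exact Finset.sum_congr rfl fun j _ => vecMulVec_transpose' _ _
    have hPkP : Pk * Pk = Pk := by
      rw [hPk, Finset.sum_mul]
      refine Finset.sum_congr rfl fun j hj => ?_
      rw [Finset.mul_sum]
      have h : ∀ l, Matrix.vecMulVec (u j) (u j) * Matrix.vecMulVec (u l) (u l)
          = (u j ⬝ᵥ u l) • Matrix.vecMulVec (u j) (u l) :=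
        fun l => vecMulVec_mul_vecMulVec _ _ _ _
      simp only [h, huon, ite_smul, one_smul, zero_smul]
      rw [Finset.sum_ite_eq _ j (fun l => Matrix.vecMulVec (u j) (u l))]
      simp [hj]
    have hstep : Y - (Pk * Y * Xp) * X = (Y - Z) + (Z - Pk * Z) := by
      have h : (Pk * Y * Xp) * X = Pk * Z := by
        rw [Matrix.mul_assoc (Pk * Y), Matrix.mul_assoc Pk Y, ← hZ]
      rw [h]; abel
    have hcross : Matrix.trace ((Y - Z) * (Z - Pk * Z)ᵀ) = 0 := by
      have h : (Y - Z) * (Z - Pk * Z)ᵀ = 0 := by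
        rw [Matrix.transpose_sub, Matrix.mul_sub, hYZZT, Matrix.transpose_mul,
          ← Matrix.mul_assoc, hYZZT, Matrix.zero_mul, sub_self]
      rw [h, Matrix.trace_zero]
    have hc : ∀ i, u i ⬝ᵥ (Pk *ᵥ u i) = if (i : ℕ) < k then (1 : ℝ) else 0 := by
      intro i
      have hterm : ∀ j, u i ⬝ᵥ (Matrix.vecMulVec (u j) (u j) *ᵥ u i)
          = if i = j then (1 : ℝ) else 0 := by
        intro j
        rw [Stmt17Aux.vecMulVec_mulVec, dotProduct_smul, huon, huon]
        by_cases h : i = j <;> simp [h, eq_comm]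
      rw [hPk, sum_mulVec', dotProduct_finset_sum]
      simp only [hterm]
      rw [Finset.sum_ite_eq]
      simp
    have htrPk : Matrix.trace (Z * Zᵀ * Pk)
        = ∑ i ∈ Finset.univ.filter (fun i : Fin n => (i : ℕ) < k), σ i ^ 2 := by
      rw [htrZZTP]
      simp only [hc, mul_ite, mul_one, mul_zero]
      rw [Finset.sum_filter]
    have hNeq : Z - Pk * Z = (1 - Pk) * Z := by rw [Matrix.sub_mul, Matrix.one_mul]
    have e0 : frobNorm (Y - (Pk * Y * Xp) * X) ^ 2
        = Matrix.trace ((Y - Z) * (Y - Z)ᵀ) + Matrix.trace ((Z - Pk * Z) * (Z - Pk * Z)ᵀ) := by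
      rw [hstep, frob_sq, pyth hcross]
    have e1 : Matrix.trace ((Z - Pk * Z) * (Z - Pk * Z)ᵀ)
        = ∑ i ∈ Finset.univ.filter (fun i : Fin n => k ≤ (i : ℕ)), σ i ^ 2 := by
      rw [hNeq, hproj Pk hPkT hPkP, htrPk]
      linarith [hsumsplit]
    rw [e0, e1, frob_sq, ← hZ]
  · -- optimality
    intro A hA
    have hBrank : (A * X).rank ≤ k := le_trans (Matrix.rank_mul_le_left A X) hA
    obtain ⟨P, hPT, hPP, hPB, hPtr⟩ := exists_proj k (A * X) hBrank
    set B := A * X with hB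
    set c : Fin n → ℝ := fun i => u i ⬝ᵥ (P *ᵥ u i) with hcdef
    have hc0 : ∀ i, 0 ≤ c i := fun i => dot_proj_nonneg hPT hPP (u i)
    have hQT : (1 - P)ᵀ = 1 - P := by
      rw [Matrix.transpose_sub, Matrix.transpose_one, hPT]
    have hQQ' : (1 - P) * (1 - P) = 1 - P := by
      rw [Matrix.sub_mul, Matrix.mul_sub, Matrix.mul_sub, hPP]
      simp
    have hc1 : ∀ i, c i ≤ 1 := by
      intro i
      have h0 := dot_proj_nonneg hQT hQQ' (u i)
      have h5 : u i ⬝ᵥ ((1 - P) *ᵥ u i) = 1 - c i := by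
        rw [Matrix.sub_mulVec, dotProduct_sub, Matrix.one_mulVec, huon i i]
        simp [hcdef]
      linarith [h5 ▸ h0]
    have hcsum : ∑ i, c i ≤ (k : ℝ) := by
      have h6 : ∑ i, c i = Matrix.trace P := by
        calc ∑ i, c i = ∑ i, Matrix.trace (Matrix.vecMulVec (u i) (u i) * P) :=
              Finset.sum_congr rfl fun i _ => (trace_vecMulVec_mul _ _ _).symm
          _ = Matrix.trace ((∑ i, Matrix.vecMulVec (u i) (u i)) * P) := by
              rw [Finset.sum_mul, Matrix.trace_sum]
          _ = Matrix.trace P := by rw [hsumuu, Matrix.one_mul]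
      linarith
    have hrear := rearrange k σ hσdec hσnn c hc0 hc1 hcsum
    have hZB : Z - B = P * (Z - B) + (1 - P) * (Z - B) := by
      rw [← Matrix.add_mul]; simp
    have h5 : (1 - P)ᵀ * P = 0 := by
      rw [hQT, Matrix.sub_mul, Matrix.one_mul, hPP, sub_self]
    have hcross2 : Matrix.trace ((P * (Z - B)) * ((1 - P) * (Z - B))ᵀ) = 0 := by
      rw [Matrix.transpose_mul]
      calc Matrix.trace ((P * (Z - B)) * ((Z - B)ᵀ * (1 - P)ᵀ))
          = Matrix.trace (((Z - B) * ((Z - B)ᵀ * (1 - P)ᵀ)) * P) := by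
            rw [show (P * (Z - B)) * ((Z - B)ᵀ * (1 - P)ᵀ)
                = P * ((Z - B) * ((Z - B)ᵀ * (1 - P)ᵀ)) from by
              simp only [Matrix.mul_assoc]]
            exact Matrix.trace_mul_comm _ _
        _ = 0 := by
            rw [Matrix.mul_assoc (Z - B), Matrix.mul_assoc (Z - B)ᵀ, h5,
              Matrix.mul_zero, Matrix.mul_zero, Matrix.trace_zero]
    have hNB : (1 - P) * (Z - B) = (1 - P) * Z := by
      have h7 : (1 - P) * B = 0 := by
        rw [Matrix.sub_mul, Matrix.one_mul, hPB, sub_self]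
      rw [Matrix.mul_sub, h7, sub_zero]
    have hlow : ∑ i ∈ Finset.univ.filter (fun i : Fin n => k ≤ (i : ℕ)), σ i ^ 2
        ≤ Matrix.trace ((Z - B) * (Z - B)ᵀ) := by
      have e3 : Matrix.trace ((Z - B) * (Z - B)ᵀ)
          = Matrix.trace ((P * (Z - B)) * (P * (Z - B))ᵀ)
            + Matrix.trace (((1 - P) * Z) * ((1 - P) * Z)ᵀ) := by
        conv_lhs => rw [hZB]
        rw [pyth hcross2, hNB]
      have e4 := hproj P hPT hPP
      have e5 := htrZZTP P
      have e6 := trace_sq_nonneg (P * (Z - B))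
      rw [e3, e4, e5]
      have : ∑ i, σ i ^ 2 * c i = ∑ i, σ i ^ 2 * (u i ⬝ᵥ (P *ᵥ u i)) := rfl
      linarith [hrear, hsumsplit, this ▸ hrear]
    have hsplitYB : Y - A * X = (Y - Z) + (Z - B) := by rw [hB]; abel
    have hcross3 : Matrix.trace ((Y - Z) * (Z - B)ᵀ) = 0 := by
      have h8 : (Y - Z) * (Z - B)ᵀ = 0 := by
        rw [Matrix.transpose_sub, Matrix.mul_sub, hYZZT, hB, Matrix.transpose_mul,
          ← Matrix.mul_assoc, hYZXT, Matrix.zero_mul, sub_self]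
      rw [h8, Matrix.trace_zero]
    have hfn : frobNorm (Y - Y * (Xp * X)) ^ 2
        + ∑ i ∈ Finset.univ.filter (fun i : Fin n => k ≤ (i : ℕ)), σ i ^ 2
        ≤ frobNorm (Y - A * X) ^ 2 := by
      rw [frob_sq, frob_sq, hsplitYB, pyth hcross3, ← hZ]
      linarith [hlow]
    have h0 : (0 : ℝ) ≤ frobNorm (Y - A * X) := Real.sqrt_nonneg _
    calc Real.sqrt (frobNorm (Y - Y * (Xp * X)) ^ 2
          + ∑ i ∈ Finset.univ.filter (fun i : Fin n => k ≤ (i : ℕ)), σ i ^ 2)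
        ≤ Real.sqrt (frobNorm (Y - A * X) ^ 2) := Real.sqrt_le_sqrt hfn
      _ = frobNorm (Y - A * X) := Real.sqrt_sq h0
end
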